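/- Suppose for every t ∈ ℕ, R(t) = 3^{n-1} (1 - 6/(|V_n|+1))^{2t} and ||P^t_{id} - π||_TV ≥ 1 - 4/(4 + R(t)). If t < (|V_n|/12) log |V_n| - c|V_n| with c = log(10^6)/12 and n sufficiently large, then ||P^t_{id} - π||_TV ≥ 1/4, and hence t_mix ≥ (|V_n|/12) log |V_n| - c |V_n|. -/
import Mathlib


open Real

lemma exp_neg_quad_le {x : ℝ} (h0 : 0 ≤ x) (h1 : x ≤ 1/10) :
    Real.exp (-(x + x^2)) ≤ 1 - x := by
  have h2 : ((x + x^2)/2 + 1)^2 ≤ Real.exp (x + x^2) := by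
    have h := Real.add_one_le_exp ((x + x^2)/2)
    calc ((x + x^2)/2 + 1)^2 ≤ (Real.exp ((x + x^2)/2))^2 :=
          pow_le_pow_left₀ (by nlinarith) h 2
      _ = Real.exp (x + x^2) := by rw [sq, ← Real.exp_add]; ring_nf
  have h13 : 0 ≤ 1 - 3*x - x^2 - x^3 := by nlinarith
  have key : 1 ≤ (1 - x) * Real.exp (x + x^2) := by
    nlinarith [h2, mul_nonneg (sq_nonneg x) h13, sq_nonneg x]
  rw [Real.exp_neg, inv_le_iff_one_le_mul₀ (Real.exp_pos _)]
  linarith [key]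

set_option maxHeartbeats 1000000 in
lemma gasket_aux (m : ℕ) (hm : 14 ≤ m) (d : ℕ → ℝ)
    (hd : ∀ t : ℕ, d t ≥ 1 - 4 / (4 + (3 : ℝ) ^ m *
        (1 - 6 / ((3 : ℝ) / 2 * (3 ^ (m+1) + 1) + 1)) ^ (2 * t)))
    (t : ℕ)
    (ht : (t : ℝ) < ((3 : ℝ) / 2 * (3 ^ (m+1) + 1)) / 12 *
        Real.log ((3 : ℝ) / 2 * (3 ^ (m+1) + 1))
        - (Real.log (10 ^ 6) / 12) * ((3 : ℝ) / 2 * (3 ^ (m+1) + 1))) :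
    d t ≥ 1 / 4 := by
  obtain ⟨N, hNdef⟩ : ∃ N : ℝ, N = (3:ℝ)/2 * (3 ^ (m+1) + 1) := ⟨_, rfl⟩
  rw [← hNdef] at ht
  have hd' := hd t
  rw [← hNdef] at hd'
  have h3m : (3:ℝ)^14 ≤ (3:ℝ)^m := pow_le_pow_right₀ (by norm_num) hm
  have h3m0 : (0:ℝ) < (3:ℝ)^m := by positivity
  have h314 : (3:ℝ)^14 = 4782969 := by norm_num
  have hps : (3:ℝ)^(m+1) = 3^m * 3 := pow_succ 3 m
  have hNlow : (10:ℝ)^6 ≤ N := by rw [hNdef]; linarith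
  have hNup : N ≤ 9 * (3:ℝ)^m := by rw [hNdef]; linarith
  have hN0 : (0:ℝ) < N := by linarith
  have hN1 : (0:ℝ) < N + 1 := by linarith
  obtain ⟨x, hxdef⟩ : ∃ x : ℝ, x = 6 / (N + 1) := ⟨_, rfl⟩
  rw [← hxdef] at hd'
  have hx0 : 0 < x := by rw [hxdef]; positivity
  have hx1 : x ≤ 1/10 := by rw [hxdef, div_le_iff₀ hN1]; linarith
  obtain ⟨L, hLdef⟩ : ∃ L : ℝ, L = Real.log N := ⟨_, rfl⟩
  obtain ⟨C, hCdef⟩ : ∃ C : ℝ, C = Real.log ((10:ℝ) ^ 6) := ⟨_, rfl⟩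
  rw [← hLdef, ← hCdef] at ht
  have hC0 : 0 ≤ C := by rw [hCdef]; apply Real.log_nonneg; norm_num
  have hLC : C ≤ L := by rw [hCdef, hLdef]; exact Real.log_le_log (by norm_num) hNlow
  have hL0 : 0 ≤ L := le_trans hC0 hLC
  have hLx : L * x ≤ 1 := by
    have hs0 : (1000:ℝ) ≤ Real.sqrt N := by
      rw [show (1000:ℝ) = Real.sqrt (1000^2) by rw [Real.sqrt_sq]; norm_num]
      exact Real.sqrt_le_sqrt (by nlinarith)
    have hsq : Real.sqrt N ^ 2 = N := Real.sq_sqrt hN0.le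
    have hlogs : Real.log (Real.sqrt N) ≤ Real.sqrt N - 1 :=
      Real.log_le_sub_one_of_pos (by nlinarith)
    have hL2 : L = 2 * Real.log (Real.sqrt N) := by
      rw [hLdef, Real.log_sqrt hN0.le]; ring
    have h6L : 6 * L ≤ N + 1 := by nlinarith
    have e : L * x = 6 * L / (N + 1) := by rw [hxdef]; try ring
    rw [e, div_le_one hN1]; linarith
  have hNx : N * x ≤ 6 := by
    have e : N * x = N * 6 / (N + 1) := by rw [hxdef]; try ring
    rw [e, div_le_iff₀ hN1]; linarith
  obtain ⟨T, hTdef⟩ : ∃ T : ℝ, T = N / 12 * L - (C / 12) * N := ⟨_, rfl⟩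
  have ht' : (t : ℝ) < T := by rw [hTdef]; convert ht using 2; try ring
  have hT0 : (0:ℝ) ≤ T := le_trans (Nat.cast_nonneg t) ht'.le
  have hE : 2 * T * (x + x^2) ≤ L - C + 1 := by
    have e1 : 2 * T * (x + x^2) = (L - C) * ((N * x / 6) * (1 + x)) := by
      rw [hTdef]; ring
    have e2 : (L - C) * ((N * x / 6) * (1 + x)) ≤ (L - C) * (1 * (1 + x)) := by
      apply mul_le_mul_of_nonneg_left _ (by linarith)
      apply mul_le_mul_of_nonneg_right _ (by linarith)
      linarith
    have e3 : (L - C) * (1 * (1 + x)) = L - C + (L*x - C*x) := by ring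
    linarith [mul_nonneg hC0 hx0.le]
  have hq := exp_neg_quad_le hx0.le hx1
  have hpow1 : Real.exp (-(x + x^2)) ^ (2*t) ≤ (1 - x) ^ (2*t) :=
    pow_le_pow_left₀ (Real.exp_pos _).le hq _
  have hpow2 : Real.exp (-(x + x^2)) ^ (2*t) = Real.exp (-((x + x^2) * (2*t))) := by
    rw [← Real.exp_nat_mul]; congr 1; push_cast; ring
  have hmono : Real.exp (-(L - C + 1)) ≤ Real.exp (-((x + x^2) * (2*t))) := by
    apply Real.exp_le_exp.mpr
    have h2t : (x + x^2) * (2*(t:ℝ)) ≤ (x + x^2) * (2*T) := by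
      apply mul_le_mul_of_nonneg_left (by linarith) (by nlinarith)
    try push_cast
    nlinarith
  have hval : Real.exp (-(L - C + 1)) = 10^6 / (N * Real.exp 1) := by
    rw [show -(L - C + 1) = C - (L + 1) by ring, Real.exp_sub, Real.exp_add,
        hCdef, hLdef, Real.exp_log (by norm_num : (0:ℝ) < (10:ℝ)^6),
        Real.exp_log hN0]
  have he1 : Real.exp 1 ≤ 3 := by linarith [Real.exp_one_lt_d9.le]
  have hNe : 0 < N * Real.exp 1 := by positivity
  have hfrac : (10:ℝ)^6 / (N * 3) ≤ 10^6 / (N * Real.exp 1) := by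
    apply div_le_div_of_nonneg_left (by norm_num) hNe
    nlinarith [Real.exp_pos 1]
  have hR : (4:ℝ)/3 ≤ (3:ℝ)^m * (1 - x) ^ (2*t) := by
    have hchain : (10:ℝ)^6 / (N * 3) ≤ (1 - x) ^ (2*t) := by
      calc (10:ℝ)^6 / (N * 3) ≤ 10^6 / (N * Real.exp 1) := hfrac
        _ = Real.exp (-(L - C + 1)) := hval.symm
        _ ≤ Real.exp (-((x + x^2) * (2*t))) := hmono
        _ = Real.exp (-(x + x^2)) ^ (2*t) := hpow2.symm
        _ ≤ (1 - x) ^ (2*t) := hpow1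
    have h1 : (3:ℝ)^m * ((10:ℝ)^6 / (N * 3)) ≤ (3:ℝ)^m * (1 - x) ^ (2*t) :=
      mul_le_mul_of_nonneg_left hchain h3m0.le
    have e : (3:ℝ)^m * ((10:ℝ)^6 / (N * 3)) = (10^6 * (3:ℝ)^m) / (N * 3) := by ring
    have hfin : (4:ℝ)/3 ≤ (10^6 * (3:ℝ)^m) / (N * 3) := by
      rw [le_div_iff₀ (by positivity)]
      nlinarith
    linarith [e ▸ h1]
  have hpos : (0:ℝ) < 4 + (3:ℝ)^m * (1 - x) ^ (2*t) := by linarith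
  have hb : 4 / (4 + (3:ℝ)^m * (1 - x) ^ (2*t)) ≤ 3/4 := by
    rw [div_le_div_iff₀ hpos (by norm_num)]
    linarith
  calc d t ≥ 1 - 4 / (4 + (3:ℝ)^m * (1 - x) ^ (2*t)) := hd'
    _ ≥ 1/4 := by linarith

/-- Mixing-time lower bound for the sandpile chain on `G_n`: if the total
variation distance `d t` from stationarity satisfies
`d t ≥ 1 - 4/(4 + R(t))` with `R(t) = 3^{n-1}(1 - 6/(|V_n|+1))^{2t}`, then for
`n` sufficiently large and `t < (|V_n|/12) log |V_n| - c|V_n|` with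
`c = log(10^6)/12` one has `d t ≥ 1/4`; hence
`t_mix ≥ (|V_n|/12) log |V_n| - c|V_n|`. -/
theorem gasket_mixing_lower_bound :
    ∃ n₀ : ℕ, ∀ n : ℕ, n₀ ≤ n → ∀ d : ℕ → ℝ,
      (∀ t : ℕ, d t ≥ 1 - 4 / (4 + (3 : ℝ) ^ (n - 1) *
          (1 - 6 / ((3 : ℝ) / 2 * (3 ^ n + 1) + 1)) ^ (2 * t))) →
      (∀ t : ℕ, (t : ℝ) <
          ((3 : ℝ) / 2 * (3 ^ n + 1)) / 12 * Real.log ((3 : ℝ) / 2 * (3 ^ n + 1))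
            - (Real.log (10 ^ 6) / 12) * ((3 : ℝ) / 2 * (3 ^ n + 1)) →
        d t ≥ 1 / 4) ∧
      (∀ tm : ℕ, d tm < 1 / 4 →
        ((3 : ℝ) / 2 * (3 ^ n + 1)) / 12 * Real.log ((3 : ℝ) / 2 * (3 ^ n + 1))
            - (Real.log (10 ^ 6) / 12) * ((3 : ℝ) / 2 * (3 ^ n + 1)) ≤ tm) := by
  refine ⟨15, fun n hn d hd => ?_⟩
  obtain ⟨m, rfl⟩ : ∃ m, n = m + 1 := ⟨n - 1, by omega⟩
  have hm : 14 ≤ m := by omega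
  simp only [Nat.add_sub_cancel] at hd
  constructor
  · exact fun t ht => gasket_aux m hm d hd t ht
  · intro tm hdm
    by_contra hcon
    push_neg at hcon
    linarith [gasket_aux m hm d hd tm hcon]
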